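/- Let n ≥ 2 be an integer and α a complex number. Define q_{nr-p, ns+p} := α^{r+s} · (p·r/(r+s)) · C(r - p/n, r) · C(s + p/n, s) for integers r ≥ 1, s ≥ 0, 1 ≤ p ≤ n-1, set q_{i,j} := q_{j,i}, and set q_{i,j} := 0 whenever i+j ≢ 0 (mod n) or j ≡ 0 (mod n). Let Q ∈ ℂ[[z]] be the formal power series whose coefficient of z^N is ∑_{i+j=N, i,j≥1} q_{i,j}/(i·j). Then the formal-power-series exponential of Q equals the binomial series of (1-αz^n)^{(1-n)/n}, i.e. exp(Q) = ∑_{m≥0} (-α)^m · C((1-n)/n, m) · z^{nm}. -/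

import Mathlib

/-- The generalized binomial coefficient C(x, k) = x(x-1)⋯(x-k+1)/k! for x ∈ ℂ. -/
noncomputable def cchoose (x : ℂ) (k : ℕ) : ℂ :=
  (∏ i ∈ Finset.range k, (x - i)) / (Nat.factorial k)

/-- The formal power series `Q` with coefficient of `z^N` equal to
`∑_{i+j=N, i,j ≥ 1} q_{i,j} / (i·j)`. -/
noncomputable def Qseries (q : ℕ → ℕ → ℂ) : PowerSeries ℂ :=
  PowerSeries.mk fun N =>
    ∑ ij ∈ Finset.HasAntidiagonal.antidiagonal N,
      if 1 ≤ ij.1 ∧ 1 ≤ ij.2 then q ij.1 ij.2 / ((ij.1 : ℂ) * (ij.2 : ℂ)) else 0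

/-- The exponential `exp(f) = ∑_{m≥0} f^m/m!` of a formal power series `f` with zero
constant term: since `coeff N (f^m) = 0` for `m > N`, the coefficient of `z^N` is the
finite sum `∑_{m=0}^{N} coeff N (f^m)/m!`. -/
noncomputable def psExp (f : PowerSeries ℂ) : PowerSeries ℂ :=
  PowerSeries.mk fun N =>
    ∑ m ∈ Finset.range (N + 1), (PowerSeries.coeff N (f ^ m)) / (Nat.factorial m)

open Finset Polynomial PowerSeries


lemma fact_ne (k : ℕ) : ((Nat.factorial k : ℂ)) ≠ 0 := by
  exact_mod_cast Nat.factorial_ne_zero k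

lemma cc_zero (x : ℂ) : cchoose x 0 = 1 := by simp [cchoose]

lemma cc_succ (x : ℂ) (k : ℕ) :
    cchoose x (k+1) = cchoose x k * (x - k) / ((k:ℂ)+1) := by
  unfold cchoose
  rw [prod_range_succ, Nat.factorial_succ]
  push_cast
  field_simp

lemma prodshift (x : ℂ) (k : ℕ) :
    ∏ i ∈ range (k+1), (x - i) = x * ∏ i ∈ range k, (x - 1 - i) := by
  rw [Finset.prod_range_succ']
  simp only [Nat.cast_zero, sub_zero]
  rw [mul_comm]
  congr 1
  refine Finset.prod_congr rfl fun i _ => ?_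
  push_cast; ring

lemma cc_absorb (x : ℂ) (k : ℕ) :
    ((k:ℂ)+1) * cchoose x (k+1) = x * cchoose (x-1) k := by
  unfold cchoose
  rw [prodshift, Nat.factorial_succ]
  have h1 : ((k:ℂ)+1) ≠ 0 := Nat.cast_add_one_ne_zero k
  have h2 : (1:ℂ)+(k:ℂ) ≠ 0 := by rw [add_comm]; exact h1
  push_cast
  rw [mul_div_assoc']
  rw [mul_div_mul_left _ _ h1, mul_div_assoc]

lemma cc_pascal (x : ℂ) (k : ℕ) :
    cchoose x (k+1) = cchoose (x-1) k + cchoose (x-1) (k+1) := by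
  unfold cchoose
  rw [prodshift, Nat.factorial_succ, prod_range_succ]
  have h := fact_ne k
  have h1 : ((k:ℂ)+1) ≠ 0 := Nat.cast_add_one_ne_zero k
  have h2 : (1:ℂ)+(k:ℂ) ≠ 0 := by rw [add_comm]; exact h1
  push_cast
  field_simp
  ring

lemma cc_altsum (x : ℂ) (K : ℕ) :
    ∑ j ∈ range (K+1), (-1:ℂ)^j * cchoose x j = (-1)^K * cchoose (x-1) K := by
  induction K with
  | zero => simp [cc_zero]
  | succ K ih =>
    rw [Finset.sum_range_succ, ih]
    have h := cc_pascal x K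
    rw [pow_succ]
    linear_combination ((-1:ℂ))^K * (-1) * h

lemma core_prod (g : ℕ → ℂ) (k : ℕ) :
    g k * ∏ i ∈ range k, g i = g 0 * ∏ i ∈ range k, g (i+1) := by
  rw [mul_comm, ← Finset.prod_range_succ, Finset.prod_range_succ' g k, mul_comm]



lemma prod_reflect (x : ℂ) (k : ℕ) :
    ∏ i ∈ range k, ((k:ℂ) - x - i) = (-1)^k * ∏ i ∈ range k, (x - 1 - i) := by
  have h := Finset.prod_range_reflect (fun j => (k:ℂ) - x - j) k
  rw [← h, show ((-1:ℂ))^k = ∏ _i ∈ range k, (-1:ℂ) by simp, ← Finset.prod_mul_distrib]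
  refine Finset.prod_congr rfl fun j hj => ?_
  simp only [Finset.mem_range] at hj
  have h2 : k - 1 - j = k - (j+1) := by omega
  rw [h2, Nat.cast_sub (by omega)]
  push_cast
  ring

lemma cc_sign (x : ℂ) (k : ℕ) :
    cchoose ((k:ℂ) - x) k = (-1)^k * cchoose (x - 1) k := by
  unfold cchoose
  rw [prod_reflect, mul_div_assoc]

lemma cc_neg_two (k : ℕ) : cchoose (-2 : ℂ) k = (-1)^k * ((k:ℂ)+1) := by
  induction k with
  | zero => simp [cc_zero]
  | succ k ih =>
    rw [cc_succ, ih]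
    have h1 : ((k:ℂ)+1) ≠ 0 := Nat.cast_add_one_ne_zero k
    push_cast
    field_simp
    ring

lemma cc_front (x : ℂ) (k : ℕ) :
    ((k:ℂ)+1) * cchoose ((k:ℂ)+1-x) (k+1) = ((k:ℂ)+1-x) * cchoose ((k:ℂ)-x) k := by
  unfold cchoose
  have h : ∏ i ∈ range (k+1), ((k:ℂ)+1-x - i)
      = ((k:ℂ)+1-x) * ∏ i ∈ range k, ((k:ℂ)-x - i) := by
    rw [Finset.prod_range_succ' (fun i => (k:ℂ)+1-x - i) k]
    simp only [Nat.cast_zero, sub_zero]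
    rw [mul_comm]
    congr 1
    refine Finset.prod_congr rfl fun i _ => ?_
    push_cast; ring
  rw [h, Nat.factorial_succ]
  have h1 : ((k:ℂ)+1) ≠ 0 := Nat.cast_add_one_ne_zero k
  push_cast
  rw [mul_div_assoc']
  rw [mul_div_mul_left _ _ h1, mul_div_assoc]

lemma cc_back (x : ℂ) (k : ℕ) :
    ((k:ℂ)+1-x) * cchoose ((k:ℂ)-x) k = (1-x) * cchoose ((k:ℂ)+1-x) k := by
  unfold cchoose
  have h := core_prod (fun i => (k:ℂ)+1-x-i) k
  simp only [Nat.cast_zero, sub_zero] at h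
  rw [mul_div_assoc', mul_div_assoc']
  congr 1
  have h2 : ∏ i ∈ range k, ((k:ℂ)-x - i) = ∏ i ∈ range k, ((k:ℂ)+1-x-(i+1)) := by
    refine Finset.prod_congr rfl fun i _ => ?_
    push_cast; ring
  rw [h2]
  have h3 : ((k:ℂ)+1-x-(k:ℂ)) = 1 - x := by ring
  calc ((k:ℂ)+1-x) * ∏ i ∈ range k, ((k:ℂ)+1-x-((i:ℂ)+1))
      = (fun i => (k:ℂ)+1-x-(i:ℕ)) 0 * ∏ i ∈ range k, (fun j => (k:ℂ)+1-x-(j:ℕ)) (i+1) := by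
        simp only [Nat.cast_zero, sub_zero]
        congr 1
        refine Finset.prod_congr rfl fun i _ => ?_
        push_cast; ring
    _ = (fun i => (k:ℂ)+1-x-(i:ℕ)) k * ∏ i ∈ range k, (fun j => (k:ℂ)+1-x-(j:ℕ)) i := (core_prod (fun i => (k:ℂ)+1-x-(i:ℕ)) k).symm
    _ = (1-x) * ∏ i ∈ range k, ((k:ℂ)+1-x-(i:ℂ)) := by simp only []; rw [h3]

lemma cc_E (x : ℂ) (k : ℕ) :
    x * cchoose ((k:ℂ)+x) k = ((k:ℂ)+x) * cchoose ((k:ℂ)+x-1) k := by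
  unfold cchoose
  rw [mul_div_assoc', mul_div_assoc']
  congr 1
  calc x * ∏ i ∈ range k, ((k:ℂ)+x - i)
      = (fun i => (k:ℂ)+x-(i:ℕ)) k * ∏ i ∈ range k, (fun j => (k:ℂ)+x-(j:ℕ)) i := by
        simp only []; congr 1; push_cast; ring
    _ = (fun i => (k:ℂ)+x-(i:ℕ)) 0 * ∏ i ∈ range k, (fun j => (k:ℂ)+x-(j:ℕ)) (i+1) := core_prod (fun i => (k:ℂ)+x-(i:ℕ)) k
    _ = ((k:ℂ)+x) * ∏ i ∈ range k, ((k:ℂ)+x-1-(i:ℂ)) := by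
        simp only [Nat.cast_zero, sub_zero]
        congr 1
        refine Finset.prod_congr rfl fun i _ => ?_
        push_cast; ring

lemma descPoch_eq_prod (x : ℂ) (k : ℕ) :
    (descPochhammer ℤ k).smeval x = ∏ i ∈ range k, (x - i) := by
  induction k with
  | zero => simp [descPochhammer_zero, Polynomial.smeval_one]
  | succ k ih =>
    rw [descPochhammer_succ_right, Polynomial.smeval_mul, ih, prod_range_succ]
    congr 1
    simp [Polynomial.smeval_sub, Polynomial.smeval_natCast]

lemma cc_eq_ringChoose (x : ℂ) (k : ℕ) : cchoose x k = Ring.choose x k := by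
  have h2 := Ring.descPochhammer_eq_factorial_smul_choose x k
  rw [descPoch_eq_prod] at h2
  unfold cchoose
  rw [h2, nsmul_eq_mul, mul_div_cancel_left₀ _ (fact_ne k)]

lemma cc_vandermonde (a b : ℂ) (k : ℕ) :
    ∑ ij ∈ antidiagonal k, cchoose a ij.1 * cchoose b ij.2 = cchoose (a+b) k := by
  simp only [cc_eq_ringChoose]
  exact (Ring.add_choose_eq k (mul_comm a b)).symm

lemma cc_vdm2 (a b : ℂ) (K : ℕ) :
    ∑ i ∈ range (K+1), cchoose a i * cchoose b (K-i) = cchoose (a+b) K := by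
  rw [← cc_vandermonde a b K,
    Finset.Nat.sum_antidiagonal_eq_sum_range_succ (fun i j => cchoose a i * cchoose b j)]

lemma cc_I1 (x : ℂ) (K : ℕ) :
    ∑ i ∈ range (K+1), cchoose ((i:ℂ) - x) i * cchoose (((K-i : ℕ):ℂ) + x) (K-i)
      = (K:ℂ)+1 := by
  have step : ∀ i ∈ range (K+1),
      cchoose ((i:ℂ) - x) i * cchoose (((K-i : ℕ):ℂ) + x) (K-i)
        = (-1)^K * (cchoose (x-1) i * cchoose (-x-1) (K-i)) := by
    intro i hi
    simp only [Finset.mem_range] at hi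
    rw [cc_sign x i, show (((K-i : ℕ):ℂ) + x) = ((K-i : ℕ):ℂ) - (-x) by ring, cc_sign (-x) (K-i)]
    rw [show (-x - 1 : ℂ) = -x-1 by ring]
    have hK : i + (K - i) = K := by omega
    calc (-1:ℂ)^i * cchoose (x-1) i * ((-1)^(K-i) * cchoose (-x-1) (K-i))
        = (-1)^(i + (K-i)) * (cchoose (x-1) i * cchoose (-x-1) (K-i)) := by
          rw [pow_add]; ring
      _ = (-1)^K * (cchoose (x-1) i * cchoose (-x-1) (K-i)) := by rw [hK]
  rw [Finset.sum_congr rfl step, ← Finset.mul_sum, cc_vdm2,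
    show (x-1)+(-x-1) = (-2:ℂ) by ring, cc_neg_two K, ← mul_assoc, ← mul_pow]
  simp

lemma cc_I2 (x : ℂ) (K : ℕ) :
    ∑ i ∈ range (K+1), cchoose ((i:ℂ)+1 - x) i * cchoose (((K-i : ℕ):ℂ) + x - 1) (K-i)
      = (K:ℂ)+1 := by
  have step : ∀ i ∈ range (K+1),
      cchoose ((i:ℂ)+1 - x) i * cchoose (((K-i : ℕ):ℂ) + x - 1) (K-i)
        = (-1)^K * (cchoose (x-1-1) i * cchoose (1-x-1) (K-i)) := by
    intro i hi
    simp only [Finset.mem_range] at hi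
    rw [show ((i:ℂ)+1 - x) = (i:ℂ) - (x-1) by ring, cc_sign (x-1) i,
      show (((K-i : ℕ):ℂ) + x - 1) = ((K-i : ℕ):ℂ) - (1-x) by ring, cc_sign (1-x) (K-i)]
    have hK : i + (K - i) = K := by omega
    calc (-1:ℂ)^i * cchoose (x-1-1) i * ((-1)^(K-i) * cchoose (1-x-1) (K-i))
        = (-1)^(i + (K-i)) * (cchoose (x-1-1) i * cchoose (1-x-1) (K-i)) := by
          rw [pow_add]; ring
      _ = _ := by rw [hK]
  rw [Finset.sum_congr rfl step, ← Finset.mul_sum, cc_vdm2,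
    show (x-1-1)+(1-x-1) = (-2:ℂ) by ring, cc_neg_two K, ← mul_assoc, ← mul_pow]
  simp

lemma key_pointwise (n p a t : ℕ) (hp1 : 1 ≤ p) (hpn : p < n) :
    ((p:ℂ) * ((a:ℂ)+1) * cchoose (((a:ℂ)+1) - (p:ℂ)/(n:ℂ)) (a+1)
        * cchoose ((t:ℂ) + (p:ℂ)/(n:ℂ)) t)
      / (((n*(a+1) - p : ℕ):ℂ) * ((n*t + p : ℕ):ℂ))
    = (p:ℂ)/((n:ℂ)^2*((a:ℂ)+1+(t:ℂ)))
        * (cchoose ((a:ℂ)-(p:ℂ)/(n:ℂ)) a * cchoose ((t:ℂ)+(p:ℂ)/(n:ℂ)) t)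
      + (1-(p:ℂ)/(n:ℂ))/((n:ℂ)*((a:ℂ)+1+(t:ℂ)))
        * (cchoose ((a:ℂ)+1-(p:ℂ)/(n:ℂ)) a * cchoose ((t:ℂ)+(p:ℂ)/(n:ℂ)-1) t) := by
  set x : ℂ := (p:ℂ)/(n:ℂ) with hx
  have hn2 : 2 ≤ n := by omega
  have hn0 : (n:ℂ) ≠ 0 := Nat.cast_ne_zero.mpr (by omega)
  have hple : p ≤ n*(a+1) := by nlinarith [Nat.le_mul_of_pos_right n (show 0 < a+1 by omega)]
  have hci : ((n*(a+1) - p : ℕ):ℂ) = (n:ℂ)*(((a:ℂ)+1) - x) := by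
    rw [Nat.cast_sub hple, hx]
    push_cast
    field_simp
  have hcj : ((n*t + p : ℕ):ℂ) = (n:ℂ)*((t:ℂ) + x) := by
    rw [hx]; push_cast; field_simp
  have hia : ((a:ℂ)+1) - x ≠ 0 := by
    have h : (((n*(a+1) - p : ℕ)):ℂ) ≠ 0 := Nat.cast_ne_zero.mpr
      (by have h2 := Nat.le_mul_of_pos_right n (show 0 < a+1 by omega); omega)
    intro h0; rw [hci, h0, mul_zero] at h; exact h rfl
  have hjx : (t:ℂ) + x ≠ 0 := by
    have h : (((n*t + p : ℕ)):ℂ) ≠ 0 := Nat.cast_ne_zero.mpr (by omega)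
    intro h0; rw [hcj, h0, mul_zero] at h; exact h rfl
  have hx0 : x ≠ 0 := by
    rw [hx]; exact div_ne_zero (Nat.cast_ne_zero.mpr (by omega)) hn0
  have h1x : 1 - x ≠ 0 := by
    rw [hx]
    intro h
    have : (p:ℂ) = (n:ℂ) := by field_simp at h; linear_combination -h
    have : p = n := by exact_mod_cast this
    omega
  have ha1 : ((a:ℂ)+1) ≠ 0 := Nat.cast_add_one_ne_zero a
  have hs0 : (a:ℂ)+1+(t:ℂ) ≠ 0 := by
    have : ((a+1+t : ℕ):ℂ) ≠ 0 := Nat.cast_ne_zero.mpr (by omega)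
    push_cast at this; exact this
  have hpx : (p:ℂ) = x*(n:ℂ) := by rw [hx]; field_simp
  have hA2 : cchoose (((a:ℂ)+1) - x) (a+1)
      = (((a:ℂ)+1-x) * cchoose ((a:ℂ)-x) a)/((a:ℂ)+1) := by
    rw [eq_div_iff ha1]; linear_combination cc_front x a
  have hA3 : cchoose ((a:ℂ)+1-x) a
      = (((a:ℂ)+1-x) * cchoose ((a:ℂ)-x) a)/(1-x) := by
    rw [eq_div_iff h1x]; linear_combination -(cc_back x a)
  have hB2 : cchoose ((t:ℂ)+x-1) t = x * cchoose ((t:ℂ)+x) t / ((t:ℂ)+x) := by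
    rw [eq_div_iff hjx]; linear_combination (cc_E x t).symm
  rw [hci, hcj, hA2, hA3, hB2, hpx]
  field_simp
  ring

lemma keyp' (n m p : ℕ) (hm : 1 ≤ m) (hp1 : 1 ≤ p) (hpn : p < n) :
    ∑ a ∈ range m,
      ((p:ℂ) * ((a:ℂ)+1) * cchoose (((a:ℂ)+1) - (p:ℂ)/(n:ℂ)) (a+1)
          * cchoose (((m-1-a : ℕ):ℂ) + (p:ℂ)/(n:ℂ)) (m-1-a))
        / (((n*(a+1) - p : ℕ):ℂ) * ((n*(m-1-a) + p : ℕ):ℂ))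
      = 1/(n:ℂ) := by
  obtain ⟨K, rfl⟩ : ∃ K, m = K+1 := ⟨m-1, by omega⟩
  have hn0 : (n:ℂ) ≠ 0 := Nat.cast_ne_zero.mpr (by omega)
  have hK1 : ((K:ℂ)+1) ≠ 0 := Nat.cast_add_one_ne_zero K
  have hsplit : ∀ a ∈ range (K+1),
      ((p:ℂ) * ((a:ℂ)+1) * cchoose (((a:ℂ)+1) - (p:ℂ)/(n:ℂ)) (a+1)
          * cchoose (((K+1-1-a : ℕ):ℂ) + (p:ℂ)/(n:ℂ)) (K+1-1-a))
        / (((n*(a+1) - p : ℕ):ℂ) * ((n*(K+1-1-a) + p : ℕ):ℂ))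
      = (p:ℂ)/((n:ℂ)^2*((K:ℂ)+1))
          * (cchoose ((a:ℂ)-(p:ℂ)/(n:ℂ)) a * cchoose (((K-a : ℕ):ℂ)+(p:ℂ)/(n:ℂ)) (K-a))
        + (1-(p:ℂ)/(n:ℂ))/((n:ℂ)*((K:ℂ)+1))
          * (cchoose ((a:ℂ)+1-(p:ℂ)/(n:ℂ)) a * cchoose (((K-a : ℕ):ℂ)+(p:ℂ)/(n:ℂ)-1) (K-a)) := by
    intro a ha
    simp only [Finset.mem_range] at ha
    have ht : K+1-1-a = K-a := by omega
    rw [ht]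
    have hsum : (a:ℂ)+1+((K-a : ℕ):ℂ) = (K:ℂ)+1 := by
      rw [Nat.cast_sub (by omega)]; ring
    rw [key_pointwise n p a (K-a) hp1 hpn, hsum]
  rw [Finset.sum_congr rfl hsplit, Finset.sum_add_distrib, ← Finset.mul_sum, ← Finset.mul_sum,
    cc_I1 ((p:ℂ)/(n:ℂ)) K, cc_I2 ((p:ℂ)/(n:ℂ)) K]
  field_simp
  ring

lemma sum_range_mul (f : ℕ → ℂ) (n m : ℕ) :
    ∑ j ∈ range (n*m), f j = ∑ a ∈ range m, ∑ c ∈ range n, f (n*a + c) := by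
  induction m with
  | zero => simp
  | succ m ih =>
    rw [Finset.sum_range_succ, ← ih, show n*(m+1) = n*m + n by ring,
      ← Finset.sum_range_add_sum_Ico f (show n*m ≤ n*m + n by omega),
      Finset.sum_Ico_eq_sum_range]
    simp only [Nat.add_sub_cancel_left]

lemma coeff_Q (n : ℕ) (hn : 2 ≤ n) (α : ℂ) (q : ℕ → ℕ → ℂ)
    (hq : ∀ r s p : ℕ, 1 ≤ r → 1 ≤ p → p ≤ n - 1 →
      q (n * r - p) (n * s + p)
        = α ^ (r + s) * ((p : ℂ) * r / ((r : ℂ) + s))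
            * cchoose ((r : ℂ) - (p : ℂ) / (n : ℂ)) r
            * cchoose ((s : ℂ) + (p : ℂ) / (n : ℂ)) s)
    (hsym : ∀ i j : ℕ, q i j = q j i)
    (hzero : ∀ i j : ℕ, (¬ (n ∣ (i + j)) ∨ n ∣ j) → q i j = 0) (N : ℕ) :
    PowerSeries.coeff N (Qseries q)
      = if n ∣ N ∧ N ≠ 0 then ((n:ℂ)-1) * α^(N/n) / (N:ℂ) else 0 := by
  rw [Qseries, PowerSeries.coeff_mk]
  by_cases hdvd : n ∣ N ∧ N ≠ 0
  case neg =>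
    rw [if_neg hdvd]
    apply Finset.sum_eq_zero
    intro ij hij
    rw [Finset.HasAntidiagonal.mem_antidiagonal] at hij
    by_cases hc : 1 ≤ ij.1 ∧ 1 ≤ ij.2
    · rw [if_pos hc]
      have hN0 : N ≠ 0 := by omega
      have hnd : ¬ n ∣ (ij.1 + ij.2) := by rw [hij]; tauto
      rw [hzero ij.1 ij.2 (Or.inl hnd), zero_div]
    · rw [if_neg hc]
  case pos =>
    rw [if_pos hdvd]
    obtain ⟨⟨m, rfl⟩, hN0⟩ := hdvd
    have hm : 1 ≤ m := by
      rcases Nat.eq_zero_or_pos m with h | h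
      · exfalso; exact hN0 (by rw [h, mul_zero])
      · exact h
    have hmdiv : n*m/n = m := Nat.mul_div_cancel_left m (by omega)
    rw [hmdiv]
    rw [Finset.Nat.sum_antidiagonal_eq_sum_range_succ
      (fun i j => if 1 ≤ i ∧ 1 ≤ j then q i j / ((i:ℂ) * (j:ℂ)) else 0) (n*m)]
    rw [Finset.sum_range_succ]
    simp only [Nat.sub_self, Nat.lt_irrefl, and_false, if_false,
      show ¬ (1 ≤ (0:ℕ)) by omega, add_zero]
    rw [sum_range_mul (fun i => if 1 ≤ i ∧ 1 ≤ n*m - i then q i (n*m - i) / ((i:ℂ) * ((n*m - i : ℕ):ℂ)) else 0) n m]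
    rw [Finset.sum_comm]
    have hinner : ∀ c ∈ range n,
        (∑ a ∈ range m, (if 1 ≤ n*a+c ∧ 1 ≤ n*m - (n*a+c)
            then q (n*a+c) (n*m - (n*a+c)) / (((n*a+c : ℕ):ℂ) * ((n*m-(n*a+c) : ℕ):ℂ))
            else 0))
        = if c = 0 then 0 else α^m/((m:ℂ)*(n:ℂ)) := by
      intro c hc
      rw [Finset.mem_range] at hc
      by_cases hc0 : c = 0
      · subst hc0
        rw [if_pos rfl]
        apply Finset.sum_eq_zero
        intro a ha
        by_cases h1 : 1 ≤ n*a+0 ∧ 1 ≤ n*m - (n*a+0)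
        · rw [if_pos h1]
          have hz : q (n*a+0) (n*m - (n*a+0)) = 0 := by
            rw [hsym]; exact hzero _ _ (Or.inr ⟨a, by omega⟩)
          rw [hz, zero_div]
        · rw [if_neg h1]
      · rw [if_neg hc0]
        have hterm : ∀ a ∈ range m,
            (if 1 ≤ n*a+c ∧ 1 ≤ n*m - (n*a+c)
            then q (n*a+c) (n*m - (n*a+c)) / (((n*a+c : ℕ):ℂ) * ((n*m-(n*a+c) : ℕ):ℂ))
            else 0)
            = (α^m/(m:ℂ)) *
              ((((n-c : ℕ):ℂ) * ((a:ℂ)+1) * cchoose (((a:ℂ)+1) - ((n-c:ℕ):ℂ)/(n:ℂ)) (a+1)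
                  * cchoose (((m-1-a : ℕ):ℂ) + ((n-c:ℕ):ℂ)/(n:ℂ)) (m-1-a))
                / (((n*(a+1) - (n-c) : ℕ):ℂ) * ((n*(m-1-a) + (n-c) : ℕ):ℂ))) := by
          intro a ha
          rw [Finset.mem_range] at ha
          have e1 : n*(a+1) = n*a + n := by ring
          have hmul : n*a + n ≤ n*m := by
            have := Nat.mul_le_mul_left n (show a+1 ≤ m by omega)
            rw [e1] at this; exact this
          have hcond : 1 ≤ n*a+c ∧ 1 ≤ n*m - (n*a+c) := by
            constructor <;> omega
          rw [if_pos hcond]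
          have hi : n*a + c = n*(a+1) - (n-c) := by rw [e1]; omega
          have e2 : n*(m-1-a) = n*m - n - n*a := by
            rw [Nat.mul_sub, Nat.mul_sub, mul_one]
          have hj : n*m - (n*a+c) = n*(m-1-a) + (n-c) := by rw [e2]; omega
          rw [hj, hi, hq (a+1) (m-1-a) (n-c) (by omega) (by omega) (by omega)]
          rw [show (a+1) + (m-1-a) = m from by omega]
          have e3 : ((a+1 : ℕ):ℂ) = (a:ℂ)+1 := by push_cast; ring
          have e4 : ((a+1 : ℕ):ℂ) + ((m-1-a : ℕ):ℂ) = (m:ℂ) := by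
            rw [← Nat.cast_add, show (a+1)+(m-1-a) = m from by omega]
          rw [e4, e3]
          ring
        rw [Finset.sum_congr rfl hterm, ← Finset.mul_sum,
          keyp' n m (n-c) hm (by omega) (by omega)]
        rw [div_mul_div_comm, mul_one]
    rw [Finset.sum_congr rfl hinner]
    obtain ⟨n', rfl⟩ : ∃ n', n = n'+1 := ⟨n-1, by omega⟩
    rw [Finset.sum_range_succ' (fun c => if c = 0 then 0 else α^m/((m:ℂ)*((n'+1 : ℕ):ℂ))) n']
    simp only [if_pos rfl, add_zero, Nat.succ_ne_zero, if_false,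
      Finset.sum_const, Finset.card_range, nsmul_eq_mul]
    have hm0 : (m:ℂ) ≠ 0 := Nat.cast_ne_zero.mpr (by omega)
    have hn0 : ((n'+1 : ℕ):ℂ) ≠ 0 := Nat.cast_ne_zero.mpr (by omega)
    push_cast
    field_simp
    ring

lemma coeff_pow_eq_zero {f : PowerSeries ℂ} (hf : constantCoeff f = 0)
    {i m : ℕ} (h : i < m) : PowerSeries.coeff i (f^m) = 0 := by
  have hd : (X : PowerSeries ℂ)^m ∣ f^m := pow_dvd_pow_of_dvd (X_dvd_iff.mpr hf) m
  exact PowerSeries.X_pow_dvd_iff.mp hd i h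

lemma psExp_coeff_zero (f : PowerSeries ℂ) : PowerSeries.coeff 0 (psExp f) = 1 := by
  simp [psExp]

lemma derivFun_pow (f : PowerSeries ℂ) (m : ℕ) :
    PowerSeries.derivativeFun (f^(m+1)) = (m+1) • (f^m * PowerSeries.derivativeFun f) := by
  induction m with
  | zero => simp
  | succ m ih =>
    rw [pow_succ, PowerSeries.derivativeFun_mul, ih]
    simp only [smul_eq_mul, nsmul_eq_mul]
    push_cast
    ring

lemma psExp_rec (f : PowerSeries ℂ) (hf : constantCoeff f = 0) (N : ℕ) :
    ((N:ℂ)+1) * PowerSeries.coeff (N+1) (psExp f)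
      = ∑ ij ∈ antidiagonal N,
          PowerSeries.coeff ij.1 (psExp f) * (((ij.2:ℂ)+1) * PowerSeries.coeff (ij.2+1) f) := by
  have hpsc : ∀ i : ℕ, i ≤ N → PowerSeries.coeff i (psExp f)
      = ∑ m ∈ range (N+1), PowerSeries.coeff i (f^m) / (Nat.factorial m) := by
    intro i hi
    rw [psExp, PowerSeries.coeff_mk]
    apply Finset.sum_subset (by intro z hz; simp only [Finset.mem_range] at hz ⊢; omega)
    intro m hm1 hm2
    simp only [Finset.mem_range] at hm1 hm2
    rw [coeff_pow_eq_zero hf (show i < m by omega), zero_div]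
  calc ((N:ℂ)+1) * PowerSeries.coeff (N+1) (psExp f)
      = ∑ m ∈ range (N+2), ((N:ℂ)+1) * PowerSeries.coeff (N+1) (f^m) / (Nat.factorial m) := by
        rw [psExp, PowerSeries.coeff_mk, Finset.mul_sum]
        exact Finset.sum_congr rfl fun m _ => by rw [mul_div_assoc]
    _ = ∑ m ∈ range (N+1), ((N:ℂ)+1) * PowerSeries.coeff (N+1) (f^(m+1)) / (Nat.factorial (m+1)) := by
        rw [Finset.sum_range_succ'
          (fun m => ((N:ℂ)+1) * PowerSeries.coeff (N+1) (f^m) / (Nat.factorial m)) (N+1)]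
        simp
    _ = ∑ m ∈ range (N+1), PowerSeries.coeff N (f^m * PowerSeries.derivativeFun f)
          / (Nat.factorial m) := by
        refine Finset.sum_congr rfl fun m _ => ?_
        have h1 : PowerSeries.coeff N ((f^(m+1)).derivativeFun)
            = PowerSeries.coeff (N+1) (f^(m+1)) * ((N:ℂ)+1) := by
          exact PowerSeries.coeff_derivative (f^(m+1)) N
        have h2 : PowerSeries.coeff N ((f^(m+1)).derivativeFun)
            = ((m:ℂ)+1) * PowerSeries.coeff N (f^m * PowerSeries.derivativeFun f) := by
          rw [derivFun_pow, map_nsmul, nsmul_eq_mul]; push_cast; ring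
        have key : ((N:ℂ)+1) * PowerSeries.coeff (N+1) (f^(m+1))
            = ((m:ℂ)+1) * PowerSeries.coeff N (f^m * PowerSeries.derivativeFun f) := by
          linear_combination h2 - h1
        rw [key, Nat.factorial_succ]
        have hm1 : ((m:ℂ)+1) ≠ 0 := Nat.cast_add_one_ne_zero m
        push_cast
        rw [mul_div_mul_left _ _ hm1]
    _ = ∑ m ∈ range (N+1), ∑ ij ∈ antidiagonal N,
          (PowerSeries.coeff ij.1 (f^m) * PowerSeries.coeff ij.2 (PowerSeries.derivativeFun f))
            / (Nat.factorial m) := by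
        refine Finset.sum_congr rfl fun m _ => ?_
        rw [PowerSeries.coeff_mul, Finset.sum_div]
    _ = ∑ ij ∈ antidiagonal N, ∑ m ∈ range (N+1),
          (PowerSeries.coeff ij.1 (f^m)/(Nat.factorial m))
            * PowerSeries.coeff ij.2 (PowerSeries.derivativeFun f) := by
        rw [Finset.sum_comm]
        exact Finset.sum_congr rfl fun ij _ => Finset.sum_congr rfl fun m _ => by ring
    _ = ∑ ij ∈ antidiagonal N,
          PowerSeries.coeff ij.1 (psExp f) * (((ij.2:ℂ)+1) * PowerSeries.coeff (ij.2+1) f) := by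
        refine Finset.sum_congr rfl fun ij hij => ?_
        rw [← Finset.sum_mul, ← hpsc ij.1 (Finset.HasAntidiagonal.antidiagonal.fst_le hij),
          show PowerSeries.coeff ij.2 (PowerSeries.derivativeFun f)
            = PowerSeries.coeff (ij.2+1) f * ((ij.2:ℂ)+1) from PowerSeries.coeff_derivative f ij.2]
        push_cast
        ring

lemma rec_unique (F G : PowerSeries ℂ) (w : ℕ → ℂ)
    (h0 : PowerSeries.coeff 0 F = PowerSeries.coeff 0 G)
    (hF : ∀ N : ℕ, ((N:ℂ)+1) * PowerSeries.coeff (N+1) F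
        = ∑ ij ∈ antidiagonal N, PowerSeries.coeff ij.1 F * w ij.2)
    (hG : ∀ N : ℕ, ((N:ℂ)+1) * PowerSeries.coeff (N+1) G
        = ∑ ij ∈ antidiagonal N, PowerSeries.coeff ij.1 G * w ij.2) :
    F = G := by
  ext N
  induction N using Nat.strong_induction_on with
  | _ N ih =>
    match N with
    | 0 => exact h0
    | Nat.succ N =>
      have hN : ((N:ℂ)+1) ≠ 0 := Nat.cast_add_one_ne_zero N
      have hs : ∑ ij ∈ antidiagonal N, PowerSeries.coeff ij.1 F * w ij.2
          = ∑ ij ∈ antidiagonal N, PowerSeries.coeff ij.1 G * w ij.2 := by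
        refine Finset.sum_congr rfl fun ij hij => ?_
        rw [ih ij.1 (Nat.lt_succ_of_le (Finset.HasAntidiagonal.antidiagonal.fst_le hij))]
      exact mul_left_cancel₀ hN ((hF N).trans (hs.trans (hG N).symm))

lemma G_rec (n : ℕ) (hn : 2 ≤ n) (α : ℂ) (N : ℕ) :
    ((N:ℂ)+1) * PowerSeries.coeff (N+1)
        (PowerSeries.mk fun M => if n ∣ M then (-α) ^ (M / n) * cchoose ((1 - (n:ℂ)) / (n:ℂ)) (M / n) else 0)
      = ∑ ij ∈ antidiagonal N,
          PowerSeries.coeff ij.1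
            (PowerSeries.mk fun M => if n ∣ M then (-α) ^ (M / n) * cchoose ((1 - (n:ℂ)) / (n:ℂ)) (M / n) else 0)
          * (if n ∣ (ij.2+1) then ((n:ℂ)-1) * α^((ij.2+1)/n) else 0) := by
  set β : ℂ := (1 - (n:ℂ)) / (n:ℂ) with hβdef
  have hn0 : (n:ℂ) ≠ 0 := Nat.cast_ne_zero.mpr (by omega)
  simp only [PowerSeries.coeff_mk]
  by_cases hd : n ∣ (N+1)
  case neg =>
    rw [if_neg hd, mul_zero]
    symm
    apply Finset.sum_eq_zero
    intro ij hij
    rw [Finset.HasAntidiagonal.mem_antidiagonal] at hij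
    by_cases h1 : n ∣ ij.1
    · by_cases h2 : n ∣ (ij.2+1)
      · exfalso
        apply hd
        have he : ij.1 + (ij.2 + 1) = N + 1 := by omega
        rw [← he]; exact Nat.dvd_add h1 h2
      · rw [if_neg h2, mul_zero]
    · rw [if_neg h1, zero_mul]
  case pos =>
    obtain ⟨M, hM⟩ := hd
    have hM1 : 1 ≤ M := by
      rcases Nat.eq_zero_or_pos M with h | h
      · rw [h, Nat.mul_zero] at hM; omega
      · exact h
    rw [if_pos ⟨M, hM⟩, show (N+1)/n = M by rw [hM, Nat.mul_div_cancel_left M (by omega : 0 < n)]]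
    rw [Finset.Nat.sum_antidiagonal_eq_sum_range_succ
      (fun i j => (if n ∣ i then (-α) ^ (i / n) * cchoose β (i / n) else 0)
        * (if n ∣ (j+1) then ((n:ℂ)-1) * α^((j+1)/n) else 0)) N]
    rw [show N.succ = n*M from hM]
    rw [sum_range_mul]
    have hinner : ∀ a ∈ range M,
        (∑ c ∈ range n,
          (if n ∣ (n*a+c) then (-α) ^ ((n*a+c) / n) * cchoose β ((n*a+c) / n) else 0)
            * (if n ∣ ((N - (n*a+c))+1) then ((n:ℂ)-1) * α^(((N - (n*a+c))+1)/n) else 0))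
        = ((n:ℂ)-1) * α^M * ((-1:ℂ)^a * cchoose β a) := by
      intro a ha
      rw [Finset.mem_range] at ha
      have hle : n*a + n ≤ n*M := by
        have h := Nat.mul_le_mul_left n (show a+1 ≤ M by omega)
        rw [Nat.mul_add, Nat.mul_one] at h; exact h
      rw [Finset.sum_eq_single_of_mem 0 (Finset.mem_range.mpr (by omega))]
      · rw [Nat.add_zero]
        rw [if_pos ⟨a, rfl⟩, Nat.mul_div_cancel_left a (by omega : 0 < n)]
        have e2 : N - n*a + 1 = n*(M-a) := by
          have e3 : n*(M-a) = n*M - n*a := Nat.mul_sub n M a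
          omega
        rw [e2, if_pos ⟨M-a, rfl⟩, Nat.mul_div_cancel_left (M-a) (by omega : 0 < n)]
        have hpow : (-α)^a = (-1:ℂ)^a * α^a := by rw [neg_pow]
        have hpow2 : α^(M-a) * α^a = α^M := by rw [← pow_add]; congr 1; omega
        calc (-α)^a * cchoose β a * (((n:ℂ)-1) * α^(M-a))
            = ((n:ℂ)-1) * (α^(M-a) * α^a) * ((-1:ℂ)^a * cchoose β a) := by rw [hpow]; ring
          _ = ((n:ℂ)-1) * α^M * ((-1:ℂ)^a * cchoose β a) := by rw [hpow2]
      · intro c hc hc0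
        rw [Finset.mem_range] at hc
        have hnd : ¬ n ∣ (n*a + c) := by
          intro hdvd
          have : n ∣ c := (Nat.dvd_add_right (Dvd.intro a rfl)).mp hdvd
          have := Nat.le_of_dvd (by omega) this
          omega
        rw [if_neg hnd, zero_mul]
    rw [Finset.sum_congr rfl hinner, ← Finset.mul_sum]
    obtain ⟨K, rfl⟩ : ∃ K, M = K+1 := ⟨M-1, by omega⟩
    rw [cc_altsum β K]
    have hNM : ((N:ℂ)+1) = (n:ℂ)*((K:ℂ)+1) := by
      have := congrArg (Nat.cast : ℕ → ℂ) hM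
      push_cast at this
      linear_combination this
    rw [hNM]
    have habs := cc_absorb β K
    have hβ : (n:ℂ) * β = 1 - (n:ℂ) := by rw [hβdef]; field_simp
    have hpow : (-α)^(K+1) = (-1:ℂ)^(K+1) * α^(K+1) := by rw [neg_pow]
    rw [hpow]
    linear_combination ((n:ℂ)*(-1:ℂ)^(K+1)*α^(K+1))*habs
      - ((-1:ℂ)^K*α^(K+1)*cchoose (β-1) K)*hβ

/-- Corollary 8.3 (ii) of the paper: `e^{q([z]|[z])} = (1-αz^n)^{(1-n)/n}` as formal
power series, where the right-hand side is the binomial series. -/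
theorem exp_Q_eq_binomial_series (n : ℕ) (hn : 2 ≤ n) (α : ℂ) (q : ℕ → ℕ → ℂ)
    (hq : ∀ r s p : ℕ, 1 ≤ r → 1 ≤ p → p ≤ n - 1 →
      q (n * r - p) (n * s + p)
        = α ^ (r + s) * ((p : ℂ) * r / ((r : ℂ) + s))
            * cchoose ((r : ℂ) - (p : ℂ) / (n : ℂ)) r
            * cchoose ((s : ℂ) + (p : ℂ) / (n : ℂ)) s)
    (hsym : ∀ i j : ℕ, q i j = q j i)
    (hzero : ∀ i j : ℕ, (¬ (n ∣ (i + j)) ∨ n ∣ j) → q i j = 0) :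
    psExp (Qseries q)
      = PowerSeries.mk fun N =>
          if n ∣ N then (-α) ^ (N / n) * cchoose ((1 - (n : ℂ)) / (n : ℂ)) (N / n)
          else 0 := by
  have hQ0 : PowerSeries.constantCoeff (Qseries q) = 0 := by
    rw [← PowerSeries.coeff_zero_eq_constantCoeff, Qseries, PowerSeries.coeff_mk]
    simp
  have hwshape : ∀ j : ℕ,
      ((j:ℂ)+1) * PowerSeries.coeff (j+1) (Qseries q)
        = if n ∣ (j+1) then ((n:ℂ)-1) * α^((j+1)/n) else 0 := by
    intro j
    rw [coeff_Q n hn α q hq hsym hzero (j+1)]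
    have hc : ((j+1:ℕ):ℂ) = (j:ℂ)+1 := by push_cast; ring
    by_cases hd : n ∣ (j+1)
    · rw [if_pos ⟨hd, Nat.succ_ne_zero j⟩, if_pos hd]
      have hj0 : ((j:ℂ)+1) ≠ 0 := Nat.cast_add_one_ne_zero j
      rw [hc]
      field_simp
    · rw [if_neg (by tauto), if_neg hd, mul_zero]
  apply rec_unique (psExp (Qseries q)) _
    (fun j => ((j:ℂ)+1) * PowerSeries.coeff (j+1) (Qseries q))
  · rw [psExp_coeff_zero, PowerSeries.coeff_zero_eq_constantCoeff]
    simp [cc_zero]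
  · intro N
    exact psExp_rec (Qseries q) hQ0 N
  · intro N
    rw [G_rec n hn α N]
    exact Finset.sum_congr rfl fun ij _ => by rw [hwshape ij.2]
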